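/- Let (M^n, g, f, h) be a compact Einstein-type manifold with boundary. Then the boundary ∂M is totally umbilical: its second fundamental form with respect to ν = −∇f/|∇f| satisfies α_{ab} = (h/|∇f|)·g_{ab}, so ∂M has constant-multiple-of-metric second fundamental form and mean curvature H = h/|∇f|. -/

import Mathlib

open Matrix

/-- Euclidean norm of a vector expressed in an orthonormal frame. -/
noncomputable def vnorm {n : ℕ} (v : Fin n → ℝ) : ℝ := Real.sqrt (∑ i, v i ^ 2)

/-- Let `(Mⁿ, g, f, h)` be a compact Einstein-type manifold with boundary.
Then `∂M` is totally umbilical: with respect to the unit normal `ν = −∇f/|∇f|`, its second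
fundamental form satisfies `α_{ab} = (h/|∇f|)·g_{ab}`, and the mean curvature is
`H = h/|∇f|`. Here `e x` is a tangent orthonormal frame of `∂M` at `x`, and the second
fundamental form is computed through `α_{ab} = −(1/|∇f|)·∇²f(e_a, e_b)` on `∂M`. -/
theorem einstein_type_boundary_umbilical {M : Type*} [TopologicalSpace M] [CompactSpace M]
    {n : ℕ} (hn : 3 ≤ n)
    (f h : M → ℝ) (Ric Hess : M → Matrix (Fin n) (Fin n) ℝ)
    (gradf : M → (Fin n → ℝ))
    (bdry : Set M)
    (hf0 : ∀ x ∈ bdry, f x = 0) (hfpos : ∀ x ∉ bdry, 0 < f x)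
    (heq : ∀ x, f x • Ric x = Hess x + h x • (1 : Matrix (Fin n) (Fin n) ℝ))
    (hgradne : ∀ x ∈ bdry, vnorm (gradf x) ≠ 0)
    (e : M → Fin (n - 1) → (Fin n → ℝ))
    (hortho : ∀ x ∈ bdry, ∀ a b, e x a ⬝ᵥ e x b = if a = b then 1 else 0)
    (htangent : ∀ x ∈ bdry, ∀ a, e x a ⬝ᵥ gradf x = 0)
    (α : M → Matrix (Fin (n - 1)) (Fin (n - 1)) ℝ)
    (hα : ∀ x ∈ bdry, ∀ a b,
      α x a b = -(vnorm (gradf x))⁻¹ * (e x a ⬝ᵥ (Hess x *ᵥ e x b))) :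
    ∀ x ∈ bdry,
      α x = (h x / vnorm (gradf x)) • (1 : Matrix (Fin (n - 1)) (Fin (n - 1)) ℝ) ∧
      (1 / ((n : ℝ) - 1)) * (α x).trace = h x / vnorm (gradf x) := by
  intro x hx
  have hHess : Hess x = -(h x) • (1 : Matrix (Fin n) (Fin n) ℝ) := by
    have := heq x
    rw [hf0 x hx] at this
    simp at this
    rw [eq_comm, neg_smul, neg_eq_iff_add_eq_zero, add_comm]
    exact this.symm
  have key : α x = (h x / vnorm (gradf x)) • (1 : Matrix (Fin (n - 1)) (Fin (n - 1)) ℝ) := by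
    ext a b
    rw [hα x hx a b, hHess]
    have : (-(h x) • (1 : Matrix (Fin n) (Fin n) ℝ)) *ᵥ e x b = -(h x) • e x b := by
      rw [Matrix.smul_mulVec, Matrix.one_mulVec]
    rw [this, dotProduct_smul, hortho x hx a b]
    simp [Matrix.smul_apply, Matrix.one_apply]
    by_cases hab : a = b <;> simp [hab]
    field_simp
  refine ⟨key, ?_⟩
  have hcard : (Fintype.card (Fin (n-1)) : ℝ) = (n : ℝ) - 1 := by
    simp
    have : 1 ≤ n := by omega
    push_cast [Nat.cast_sub this]
    ring
  have hne : (n : ℝ) - 1 ≠ 0 := by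
    have : (3:ℝ) ≤ (n:ℝ) := by exact_mod_cast hn
    linarith
  rw [key]
  simp [Matrix.trace, Matrix.diag, Finset.sum_const, hcard]
  field_simp
  rw [Nat.cast_sub (by omega : 1 ≤ n), Nat.cast_one]
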